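/- Let A = {n : t_n = 0} be the set of evil numbers and R_2^{(A)}(n) the number of pairs (x,y) ∈ A × A with x < y and x + y = n. Then for all t ≥ 1, R_2^{(A)}(2^t − 1) = 0 if t is odd, and R_2^{(A)}(2^t − 1) = 2^{t−2} if t is even. -/
import Mathlib


/-- The Thue-Morse sequence: t 0 = 0, t (2n) = t n, t (2n+1) = 1 - t n. -/
def tm (n : ℕ) : ℕ :=
  if h : n = 0 then 0
  else if n % 2 = 0 then tm (n / 2) else 1 - tm (n / 2)
decreasing_by all_goals exact Nat.div_lt_self (Nat.pos_of_ne_zero h) one_lt_two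

/-- R₂ for the evil numbers A = {n : t n = 0}. -/
noncomputable def R2A (n : ℕ) : ℕ :=
  Nat.card {p : ℕ × ℕ | tm p.1 = 0 ∧ tm p.2 = 0 ∧ p.1 < p.2 ∧ p.1 + p.2 = n}

lemma tm_zero : tm 0 = 0 := by rw [tm]; simp

lemma tm_two_mul (n : ℕ) : tm (2 * n) = tm n := by
  rcases Nat.eq_zero_or_pos n with h | h
  · simp [h]
  · rw [tm]
    simp [Nat.mul_div_cancel_left, Nat.mul_ne_zero, h.ne', Nat.mul_mod_right]

lemma tm_two_mul_add_one (n : ℕ) : tm (2 * n + 1) = 1 - tm n := by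
  rw [tm]
  have : (2 * n + 1) % 2 = 1 := by omega
  simp [this, Nat.add_div, Nat.mul_div_cancel_left]

lemma tm_le (n : ℕ) : tm n ≤ 1 := by
  induction n using Nat.strong_induction_on with
  | _ n ih =>
    rw [tm]
    split
    · omega
    · split
      · exact ih _ (Nat.div_lt_self (by omega) one_lt_two)
      · omega

lemma tm_compl : ∀ t x, x < 2 ^ t → tm (2 ^ t - 1 - x) = (t + tm x) % 2 := by
  intro t
  induction t with
  | zero => intro x hx; interval_cases x; simp [tm_zero]
  | succ t ih =>
    intro x hx
    have h2 : (2:ℕ) ^ (t+1) = 2 * 2 ^ t := by ring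
    have ha : x / 2 < 2 ^ t := by omega
    have hIH := ih (x / 2) ha
    have hle := tm_le (x / 2)
    rcases Nat.even_or_odd x with he | ho
    · obtain ⟨a, rfl⟩ := he
      have ha' : a < 2 ^ t := by omega
      have key : 2 ^ (t+1) - 1 - (a + a) = 2 * (2 ^ t - 1 - a) + 1 := by omega
      rw [key, tm_two_mul_add_one, ih a ha']
      have : tm (a + a) = tm a := by rw [← two_mul, tm_two_mul]
      rw [this]
      have := tm_le a
      omega
    · obtain ⟨a, rfl⟩ := ho
      have ha' : a < 2 ^ t := by omega
      have key : 2 ^ (t+1) - 1 - (2 * a + 1) = 2 * (2 ^ t - 1 - a) := by omega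
      rw [key, tm_two_mul, ih a ha', tm_two_mul_add_one]
      have := tm_le a
      omega

lemma count_evil : ∀ m, ((Finset.range (2 * m)).filter (fun x => tm x = 0)).card = m := by
  intro m
  induction m with
  | zero => simp
  | succ m ih =>
    have : 2 * (m + 1) = (2 * m + 1) + 1 := by ring
    rw [this, Finset.range_add_one, Finset.filter_insert, Finset.range_add_one,
      Finset.filter_insert]
    have h1 : tm (2 * m) = tm m := tm_two_mul m
    have h2 : tm (2 * m + 1) = 1 - tm m := tm_two_mul_add_one m
    have h3 := tm_le m
    have hn1 : 2 * m + 1 ∉ Finset.range (2 * m + 1) := by simp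
    have hn2 : 2 * m ∉ Finset.range (2 * m) := by simp
    rcases Nat.eq_zero_or_pos (tm m) with h | h
    · rw [if_neg (by omega), if_pos (by omega),
        Finset.card_insert_of_notMem (by simp [Finset.mem_filter]), ih]
    · rw [if_pos (by omega), if_neg (by omega),
        Finset.card_insert_of_notMem (by simp [Finset.mem_filter]), ih]

lemma r2a_eq (n : ℕ) : R2A n =
    ((Finset.range n).filter (fun x => tm x = 0 ∧ tm (n - x) = 0 ∧ x < n - x)).card := by
  rw [R2A, ← Nat.card_eq_finsetCard]
  apply Nat.card_congr
  refine ⟨fun p => ⟨p.1.1, ?_⟩, fun x => ⟨(x.1, n - x.1), ?_⟩, fun p => ?_, fun x => ?_⟩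
  · have hp := p.2
    obtain ⟨h1, h2, h3, h4⟩ := hp
    rw [Finset.mem_filter, Finset.mem_range]
    have hb : n - p.1.1 = p.1.2 := by omega
    rw [hb]
    exact ⟨by omega, h1, h2, h3⟩
  · have hx := x.2
    rw [Finset.mem_filter, Finset.mem_range] at hx
    exact ⟨hx.2.1, hx.2.2.1, hx.2.2.2, by omega⟩
  · apply Subtype.ext
    have hp := p.2
    obtain ⟨h1, h2, h3, h4⟩ := hp
    have hb : n - p.1.1 = p.1.2 := by omega
    simp only
    rw [hb]
  · exact Subtype.ext rfl

theorem r2a_pow_sub_one (t : ℕ) (ht : 1 ≤ t) :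
    (Odd t → R2A (2 ^ t - 1) = 0) ∧ (Even t → R2A (2 ^ t - 1) = 2 ^ (t - 2)) := by
  have hpow : (1:ℕ) ≤ 2 ^ t := Nat.one_le_two_pow
  constructor
  · intro hodd
    rw [r2a_eq, Finset.card_eq_zero, Finset.filter_eq_empty_iff]
    rintro x hx ⟨h1, h2, h3⟩
    rw [Finset.mem_range] at hx
    have hx' : x < 2 ^ t := by omega
    have := tm_compl t x hx'
    rw [h1] at this
    obtain ⟨k, rfl⟩ := hodd
    omega
  · intro heven
    have ht2 : 2 ≤ t := by
      rcases heven with ⟨k, hk⟩; omega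
    have hp : (2:ℕ) ^ t = 2 * (2 * 2 ^ (t - 2)) := by
      have h : (2:ℕ) ^ (t - 2 + 2) = 2 ^ t := by rw [Nat.sub_add_cancel ht2]
      rw [← h, pow_add]; ring
    rw [r2a_eq]
    have key : ((Finset.range (2 ^ t - 1)).filter
        (fun x => tm x = 0 ∧ tm (2 ^ t - 1 - x) = 0 ∧ x < 2 ^ t - 1 - x)) =
        (Finset.range (2 * 2 ^ (t - 2))).filter (fun x => tm x = 0) := by
      ext x
      simp only [Finset.mem_filter, Finset.mem_range]
      constructor
      · rintro ⟨hx, h1, h2, h3⟩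
        exact ⟨by omega, h1⟩
      · rintro ⟨hx, h1⟩
        have hx' : x < 2 ^ t := by omega
        have := tm_compl t x hx'
        rw [h1] at this
        obtain ⟨k, hk⟩ := heven
        refine ⟨by omega, h1, by omega, by omega⟩
    rw [key, count_evil]
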